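/- Let (G,p) be an r-dimensional framework on n vertices, r ≤ n-2, admitting a nonzero positive semidefinite stress matrix Ω. If y = 0 is the only vector y ∈ R^{m̄} satisfying Ω (Σ_{{i,j} missing} y_ij E^{ij}) = 0, then (G,p) is universally rigid; that is, every framework (G,q) with ||q^i - q^j|| = ||p^i - p^j|| for all edges {i,j} of G satisfies ||q^i - q^j|| = ||p^i - p^j|| for all pairs i,j. -/

import Mathlib

open Matrix BigOperators

/-- `E^{ij}`: the symmetric matrix with 1's in entries `(i,j)` and `(j,i)`, 0 elsewhere. -/
def Eij {n : ℕ} (i j : Fin n) : Matrix (Fin n) (Fin n) ℝ :=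
  Matrix.single i j 1 + Matrix.single j i 1

/-- The matrix of differences of squared distances. -/
def Dm {n r k : ℕ} (P : Matrix (Fin n) (Fin r) ℝ) (Q : Matrix (Fin n) (Fin k) ℝ) :
    Matrix (Fin n) (Fin n) ℝ :=
  fun i j => (∑ t, (Q i t - Q j t) ^ 2) - ∑ t, (P i t - P j t) ^ 2

lemma Dm_symm {n r k : ℕ} (P : Matrix (Fin n) (Fin r) ℝ) (Q : Matrix (Fin n) (Fin k) ℝ)
    (i j : Fin n) : Dm P Q i j = Dm P Q j i := by
  have h1 : ∀ t, (Q i t - Q j t) ^ 2 = (Q j t - Q i t) ^ 2 := fun t => by ring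
  have h2 : ∀ t, (P i t - P j t) ^ 2 = (P j t - P i t) ^ 2 := fun t => by ring
  simp only [Dm]
  rw [Finset.sum_congr rfl fun t _ => h1 t, Finset.sum_congr rfl fun t _ => h2 t]

lemma Dm_diag {n r k : ℕ} (P : Matrix (Fin n) (Fin r) ℝ) (Q : Matrix (Fin n) (Fin k) ℝ)
    (i : Fin n) : Dm P Q i i = 0 := by simp [Dm]

lemma shift_sq {k : ℕ} (a b c : Fin k → ℝ) :
    ∑ t, (a t - b t) ^ 2 =
      ∑ t, (a t - c t) ^ 2 + (∑ t, ((b t) ^ 2 - (c t) ^ 2)) - 2 * ∑ t, a t * (b t - c t) := by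
  have h : ∀ t, (a t - b t) ^ 2
      = ((a t - c t) ^ 2 + ((b t) ^ 2 - (c t) ^ 2)) - 2 * (a t * (b t - c t)) := fun t => by ring
  simp_rw [h]
  rw [Finset.sum_sub_distrib, Finset.sum_add_distrib, ← Finset.mul_sum]

lemma quad_expand {n : ℕ} (Ω : Matrix (Fin n) (Fin n) ℝ)
    (hrow : ∀ i, ∑ j, Ω i j = 0) (hcol : ∀ j, ∑ i, Ω i j = 0) (x : Fin n → ℝ) :
    ∑ i, ∑ j, Ω i j * (x i - x j) ^ 2 = -2 * ∑ i, x i * ∑ j, Ω i j * x j := by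
  have e1 : ∀ i j : Fin n, Ω i j * (x i - x j) ^ 2
      = (Ω i j * x i ^ 2 + Ω i j * x j ^ 2) - 2 * (x i * (Ω i j * x j)) := fun i j => by ring
  have hA : ∑ i, ∑ j, Ω i j * x i ^ 2 = 0 := by
    have h : ∀ i : Fin n, ∑ j, Ω i j * x i ^ 2 = (∑ j, Ω i j) * x i ^ 2 :=
      fun i => (Finset.sum_mul _ _ _).symm
    simp [h, hrow]
  have hB : ∑ i, ∑ j, Ω i j * x j ^ 2 = 0 := by
    rw [Finset.sum_comm]
    have h : ∀ j : Fin n, ∑ i, Ω i j * x j ^ 2 = (∑ i, Ω i j) * x j ^ 2 :=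
      fun j => (Finset.sum_mul _ _ _).symm
    simp [h, hcol]
  calc ∑ i, ∑ j, Ω i j * (x i - x j) ^ 2
      = ∑ i, ∑ j, ((Ω i j * x i ^ 2 + Ω i j * x j ^ 2) - 2 * (x i * (Ω i j * x j))) := by
        exact Finset.sum_congr rfl fun i _ => Finset.sum_congr rfl fun j _ => e1 i j
    _ = ((∑ i, ∑ j, Ω i j * x i ^ 2) + ∑ i, ∑ j, Ω i j * x j ^ 2)
          - 2 * ∑ i, x i * ∑ j, Ω i j * x j := by
        simp_rw [Finset.sum_sub_distrib, Finset.sum_add_distrib, ← Finset.mul_sum]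
    _ = -2 * ∑ i, x i * ∑ j, Ω i j * x j := by rw [hA, hB]; ring

/-- summing the quadratic form over all coordinates of a configuration -/
lemma config_energy {n m : ℕ} (Ω : Matrix (Fin n) (Fin n) ℝ)
    (hrow : ∀ i, ∑ j, Ω i j = 0) (hcol : ∀ j, ∑ i, Ω i j = 0)
    (X : Matrix (Fin n) (Fin m) ℝ) :
    ∑ i, ∑ j, Ω i j * (∑ t, (X i t - X j t) ^ 2)
      = -2 * ∑ t, ∑ i, X i t * ∑ j, Ω i j * X j t := by
  calc ∑ i, ∑ j, Ω i j * (∑ t, (X i t - X j t) ^ 2)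
      = ∑ i, ∑ j, ∑ t, Ω i j * (X i t - X j t) ^ 2 := by
        simp_rw [Finset.mul_sum]
    _ = ∑ t, ∑ i, ∑ j, Ω i j * (X i t - X j t) ^ 2 := by
        have h1 : ∀ i : Fin n, ∑ j, ∑ t, Ω i j * (X i t - X j t) ^ 2
            = ∑ t, ∑ j, Ω i j * (X i t - X j t) ^ 2 := fun i => Finset.sum_comm
        simp_rw [h1]
        exact Finset.sum_comm
    _ = ∑ t, -2 * ∑ i, X i t * ∑ j, Ω i j * X j t := by
        exact Finset.sum_congr rfl fun t _ => quad_expand Ω hrow hcol _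
    _ = -2 * ∑ t, ∑ i, X i t * ∑ j, Ω i j * X j t := by rw [Finset.mul_sum]

/-- If an `r`-dimensional framework `(G,p)` on `n` vertices admits a nonzero PSD
stress matrix `Ω` such that `y = 0` is the only solution of
`Ω (Σ_{missing} y_ij E^{ij}) = 0`, then `(G,p)` is universally rigid: every
framework `(G,q)` (in any Euclidean space) whose edge lengths agree with those of
`(G,p)` has all pairwise distances equal to those of `(G,p)`. -/
theorem stmt19 (n r : ℕ) (hr : r + 2 ≤ n) (G : SimpleGraph (Fin n)) [DecidableRel G.Adj]
    (hGconn : G.Connected) (hGnc : G ≠ ⊤)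
    (P : Matrix (Fin n) (Fin r) ℝ)
    (hPe : Pᵀ *ᵥ (fun _ => (1 : ℝ)) = 0) (hPrank : P.rank = r)
    (Ω : Matrix (Fin n) (Fin n) ℝ)
    (hΩsym : Ω.IsSymm) (hΩP : Ω * P = 0) (hΩe : Ω *ᵥ (fun _ => (1 : ℝ)) = 0)
    (hΩmiss : ∀ i j, i ≠ j → ¬ G.Adj i j → Ω i j = 0)
    (hΩpsd : Ω.PosSemidef) (hΩne : Ω ≠ 0)
    (huniq : ∀ y : {q : Fin n × Fin n // q.1 < q.2 ∧ ¬ G.Adj q.1 q.2} → ℝ,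
      Ω * (∑ q, y q • Eij q.1.1 q.1.2) = 0 → y = 0) :
    ∀ (k : ℕ) (Q : Matrix (Fin n) (Fin k) ℝ),
      (∀ i j, G.Adj i j →
        ∑ t, (Q i t - Q j t) ^ 2 = ∑ t, (P i t - P j t) ^ 2) →
      ∀ i j, ∑ t, (Q i t - Q j t) ^ 2 = ∑ t, (P i t - P j t) ^ 2 := by
  intro k Q hQlen
  have hrow : ∀ i, ∑ j, Ω i j = 0 := by
    intro i
    have h := congrFun hΩe i
    simpa [Matrix.mulVec, dotProduct] using h
  have hsym : ∀ i j, Ω j i = Ω i j := fun i j => hΩsym.apply i j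
  have hcol : ∀ j, ∑ i, Ω i j = 0 := by
    intro j
    calc ∑ i, Ω i j = ∑ i, Ω j i := Finset.sum_congr rfl fun i _ => hsym j i
      _ = 0 := hrow j
  have hΩPe : ∀ i t, ∑ kk, Ω i kk * P kk t = 0 := by
    intro i t
    have h := congrFun (congrFun hΩP i) t
    simpa [Matrix.mul_apply] using h
  -- Step A : Ω kills the columns of Q
  have hPzero : ∑ t : Fin r, ∑ i, P i t * ∑ j, Ω i j * P j t = 0 := by
    simp_rw [hΩPe]
    simp
  have hPQ : ∑ i, ∑ j, Ω i j * (∑ t, (Q i t - Q j t) ^ 2)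
      = ∑ i, ∑ j, Ω i j * (∑ t, (P i t - P j t) ^ 2) := by
    refine Finset.sum_congr rfl fun i _ => Finset.sum_congr rfl fun j _ => ?_
    by_cases hadj : G.Adj i j
    · rw [hQlen i j hadj]
    · by_cases hij : i = j
      · subst hij; simp
      · rw [hΩmiss i j hij hadj, zero_mul, zero_mul]
  have hQzero : ∑ t : Fin k, ∑ i, Q i t * ∑ j, Ω i j * Q j t = 0 := by
    have h1 := config_energy Ω hrow hcol Q
    have h2 := config_energy Ω hrow hcol P
    rw [hPQ, h2, hPzero] at h1
    linarith
  have hNN : ∀ t : Fin k, 0 ≤ ∑ i, Q i t * ∑ j, Ω i j * Q j t := by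
    intro t
    have h := hΩpsd.dotProduct_mulVec_nonneg (fun i => Q i t)
    simpa [dotProduct, Matrix.mulVec] using h
  have hcolQ : ∀ (t : Fin k) (i : Fin n), ∑ j, Ω i j * Q j t = 0 := by
    intro t
    have hz : ∑ i, Q i t * ∑ j, Ω i j * Q j t = 0 :=
      (Finset.sum_eq_zero_iff_of_nonneg (fun t _ => hNN t)).mp hQzero t (Finset.mem_univ t)
    have hmv : Ω *ᵥ (fun i => Q i t) = 0 := by
      apply (hΩpsd.dotProduct_mulVec_zero_iff (fun i => Q i t)).mp
      simpa [dotProduct, Matrix.mulVec] using hz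
    intro i
    have h := congrFun hmv i
    simpa [Matrix.mulVec, dotProduct] using h
  -- Step B : Ω * D = 0 entrywise
  have hdiag : ∀ i kk : Fin n, Ω i kk * Dm P Q kk i = 0 := by
    intro i kk
    by_cases hk : kk = i
    · subst hk; rw [Dm_diag, mul_zero]
    · by_cases hadj : G.Adj kk i
      · have : Dm P Q kk i = 0 := by
          simp only [Dm]
          rw [hQlen kk i hadj, sub_self]
        rw [this, mul_zero]
      · have : Ω i kk = 0 := hΩmiss i kk (fun h => hk h.symm) (fun h => hadj (G.adj_symm h))
        rw [this, zero_mul]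
  have hΩD : ∀ i j : Fin n, ∑ kk, Ω i kk * Dm P Q kk j = 0 := by
    intro i j
    set cQ : ℝ := ∑ t, ((Q j t) ^ 2 - (Q i t) ^ 2) with hcQ
    set cP : ℝ := ∑ t, ((P j t) ^ 2 - (P i t) ^ 2) with hcP
    have hterm : ∀ kk, Ω i kk * Dm P Q kk j
        = Ω i kk * Dm P Q kk i + Ω i kk * (cQ - cP)
          - 2 * (Ω i kk * ∑ t, Q kk t * (Q j t - Q i t))
          + 2 * (Ω i kk * ∑ t, P kk t * (P j t - P i t)) := by
      intro kk
      have h1 := shift_sq (fun t => Q kk t) (fun t => Q j t) (fun t => Q i t)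
      have h2 := shift_sq (fun t => P kk t) (fun t => P j t) (fun t => P i t)
      simp only [Dm, hcQ, hcP]
      rw [h1, h2]
      ring
    have h3 : ∑ kk, Ω i kk * ∑ t, Q kk t * (Q j t - Q i t) = 0 := by
      calc ∑ kk, Ω i kk * ∑ t, Q kk t * (Q j t - Q i t)
          = ∑ kk, ∑ t, Ω i kk * Q kk t * (Q j t - Q i t) := by
            simp_rw [Finset.mul_sum, mul_assoc]
        _ = ∑ t, ∑ kk, Ω i kk * Q kk t * (Q j t - Q i t) := Finset.sum_comm
        _ = ∑ t, (∑ kk, Ω i kk * Q kk t) * (Q j t - Q i t) := by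
            simp_rw [← Finset.sum_mul]
        _ = 0 := by simp [hcolQ]
    have h4 : ∑ kk, Ω i kk * ∑ t, P kk t * (P j t - P i t) = 0 := by
      calc ∑ kk, Ω i kk * ∑ t, P kk t * (P j t - P i t)
          = ∑ kk, ∑ t, Ω i kk * P kk t * (P j t - P i t) := by
            simp_rw [Finset.mul_sum, mul_assoc]
        _ = ∑ t, ∑ kk, Ω i kk * P kk t * (P j t - P i t) := Finset.sum_comm
        _ = ∑ t, (∑ kk, Ω i kk * P kk t) * (P j t - P i t) := by
            simp_rw [← Finset.sum_mul]
        _ = 0 := by simp [hΩPe]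
    have h5 : ∑ kk, Ω i kk * (cQ - cP) = 0 := by
      rw [← Finset.sum_mul, hrow, zero_mul]
    have h6 : ∑ kk, Ω i kk * Dm P Q kk i = 0 := Finset.sum_eq_zero fun kk _ => hdiag i kk
    calc ∑ kk, Ω i kk * Dm P Q kk j
        = ∑ kk, (Ω i kk * Dm P Q kk i + Ω i kk * (cQ - cP)
            - 2 * (Ω i kk * ∑ t, Q kk t * (Q j t - Q i t))
            + 2 * (Ω i kk * ∑ t, P kk t * (P j t - P i t))) :=
          Finset.sum_congr rfl fun kk _ => hterm kk
      _ = (∑ kk, Ω i kk * Dm P Q kk i) + (∑ kk, Ω i kk * (cQ - cP))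
            - 2 * (∑ kk, Ω i kk * ∑ t, Q kk t * (Q j t - Q i t))
            + 2 * (∑ kk, Ω i kk * ∑ t, P kk t * (P j t - P i t)) := by
          rw [Finset.sum_add_distrib, Finset.sum_sub_distrib, Finset.sum_add_distrib,
            ← Finset.mul_sum, ← Finset.mul_sum]
      _ = 0 := by rw [h3, h4, h5, h6]; ring
  -- Step C : the sum over missing edges reproduces Dm
  set y : {q : Fin n × Fin n // q.1 < q.2 ∧ ¬ G.Adj q.1 q.2} → ℝ :=
    fun q => Dm P Q q.1.1 q.1.2 with hy
  have hS : (∑ q : {q : Fin n × Fin n // q.1 < q.2 ∧ ¬ G.Adj q.1 q.2},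
      y q • Eij q.1.1 q.1.2) = Dm P Q := by
    ext i j
    rw [Matrix.sum_apply]
    have hentry : ∀ q : {q : Fin n × Fin n // q.1 < q.2 ∧ ¬ G.Adj q.1 q.2},
        (y q • Eij q.1.1 q.1.2) i j
          = y q * ((if q.1.1 = i ∧ q.1.2 = j then (1:ℝ) else 0)
              + (if q.1.2 = i ∧ q.1.1 = j then (1:ℝ) else 0)) := by
      intro q
      simp [Eij, Matrix.single, Matrix.smul_apply, Matrix.add_apply, smul_eq_mul]
    simp_rw [hentry]
    rcases lt_trichotomy i j with hij | hij | hij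
    · by_cases hadj : G.Adj i j
      · rw [Finset.sum_eq_zero, ]
        · have : Dm P Q i j = 0 := by
            simp only [Dm]; rw [hQlen i j hadj, sub_self]
          rw [this]
        · intro q _
          rcases q with ⟨⟨a, b⟩, hab, hnadj⟩
          have hne1 : ¬(a = i ∧ b = j) := fun h => hnadj (by rw [h.1, h.2]; exact hadj)
          have hne2 : ¬(b = i ∧ a = j) := by
            rintro ⟨h1, h2⟩
            rw [h1, h2] at hab
            exact absurd hij (not_lt.mpr (le_of_lt hab))
          simp [hne1, hne2]
      · have hmem : (⟨(i, j), hij, hadj⟩ :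
            {q : Fin n × Fin n // q.1 < q.2 ∧ ¬ G.Adj q.1 q.2}) ∈ Finset.univ :=
          Finset.mem_univ _
        rw [Finset.sum_eq_single_of_mem _ hmem]
        · have hne2 : ¬((j : Fin n) = i ∧ (i : Fin n) = j) := by
            rintro ⟨h1, _⟩; exact absurd hij (by rw [h1]; exact lt_irrefl i)
          simp [hy, hne2]
        · rintro ⟨⟨a, b⟩, hab, hnadj⟩ _ hne
          have hne1 : ¬(a = i ∧ b = j) := by
            rintro ⟨h1, h2⟩
            exact hne (by subst h1; subst h2; rfl)
          have hne2 : ¬(b = i ∧ a = j) := by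
            rintro ⟨h1, h2⟩
            rw [h1, h2] at hab
            exact absurd hij (not_lt.mpr (le_of_lt hab))
          simp [hne1, hne2]
    · subst hij
      rw [Finset.sum_eq_zero, Dm_diag]
      rintro ⟨⟨a, b⟩, hab, hnadj⟩ _
      have hne1 : ¬(a = i ∧ b = i) := by
        rintro ⟨h1, h2⟩; rw [h1, h2] at hab; exact lt_irrefl i hab
      have hne2 : ¬(b = i ∧ a = i) := by
        rintro ⟨h1, h2⟩; rw [h1, h2] at hab; exact lt_irrefl i hab
      simp [hne1, hne2]
    · by_cases hadj : G.Adj i j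
      · rw [Finset.sum_eq_zero]
        · have : Dm P Q i j = 0 := by
            simp only [Dm]; rw [hQlen i j hadj, sub_self]
          rw [this]
        · rintro ⟨⟨a, b⟩, hab, hnadj⟩ _
          have hne1 : ¬(a = i ∧ b = j) := by
            rintro ⟨h1, h2⟩
            rw [h1, h2] at hab
            exact absurd hij (not_lt.mpr (le_of_lt hab))
          have hne2 : ¬(b = i ∧ a = j) := fun h =>
            hnadj (by rw [h.1, h.2]; exact G.adj_symm hadj)
          simp [hne1, hne2]
      · have hadj' : ¬ G.Adj j i := fun h => hadj (G.adj_symm h)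
        have hmem : (⟨(j, i), hij, hadj'⟩ :
            {q : Fin n × Fin n // q.1 < q.2 ∧ ¬ G.Adj q.1 q.2}) ∈ Finset.univ :=
          Finset.mem_univ _
        rw [Finset.sum_eq_single_of_mem _ hmem]
        · have hne1 : ¬((j : Fin n) = i ∧ (i : Fin n) = j) := by
            rintro ⟨h1, _⟩; exact absurd hij (by rw [h1]; exact lt_irrefl i)
          have : Dm P Q j i = Dm P Q i j := Dm_symm P Q j i
          simp [hy, hne1, this]
        · rintro ⟨⟨a, b⟩, hab, hnadj⟩ _ hne
          have hne1 : ¬(a = i ∧ b = j) := by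
            rintro ⟨h1, h2⟩
            rw [h1, h2] at hab
            exact absurd hij (not_lt.mpr (le_of_lt hab))
          have hne2 : ¬(b = i ∧ a = j) := by
            rintro ⟨h1, h2⟩
            exact hne (by subst h1; subst h2; rfl)
          simp [hne1, hne2]
  have hy0 : y = 0 := by
    apply huniq
    rw [hS]
    ext i j
    rw [Matrix.mul_apply]
    simpa using hΩD i j
  -- conclude
  have hD0 : ∀ i j, Dm P Q i j = 0 := by
    intro i j
    rcases lt_trichotomy i j with hij | hij | hij
    · by_cases hadj : G.Adj i j
      · simp only [Dm]; rw [hQlen i j hadj, sub_self]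
      · have h := congrFun hy0 ⟨(i, j), hij, hadj⟩
        simpa [hy] using h
    · subst hij; exact Dm_diag P Q i
    · by_cases hadj : G.Adj i j
      · simp only [Dm]; rw [hQlen i j hadj, sub_self]
      · have hadj' : ¬ G.Adj j i := fun h => hadj (G.adj_symm h)
        have h := congrFun hy0 ⟨(j, i), hij, hadj'⟩
        rw [Dm_symm]
        simpa [hy] using h
  intro i j
  have h := hD0 i j
  simp only [Dm] at h
  linarith
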